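/- Let (Ω, 𝓕, ℙ) be a probability space, let 𝒜 and ℬ be sub-σ-algebras of 𝓕, and let δ ≥ 0 satisfy |ℙ(A ∩ B) − ℙ(A)ℙ(B)| ≤ δ for every A ∈ 𝒜 and B ∈ ℬ. Then for every bounded nonnegative 𝒜-measurable random variable f and every bounded nonnegative ℬ-measurable random variable g, |𝔼[f g] − 𝔼[f]𝔼[g]| ≤ δ · ‖f‖_∞ · ‖g‖_∞. -/

import Mathlib

open MeasureTheory Set ENNReal

private lemma trunc_lintegral (F : ℝ → ℝ≥0∞) {M : ℝ} (hM : 0 ≤ M)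
    (hF : ∀ s, M < s → F s = 0) :
    ∫⁻ s in Ioi (0:ℝ), F s = ∫⁻ s in Ioc 0 M, F s := by
  rw [← Ioc_union_Ioi_eq_Ioi hM,
    lintegral_union measurableSet_Ioi (Ioc_disjoint_Ioi le_rfl)]
  have h0 : ∫⁻ s in Ioi M, F s = 0 := by
    rw [setLIntegral_congr_fun measurableSet_Ioi
      (fun s hs => hF s hs)]
    simp
  simp [h0]

private lemma double_add_const {M N : ℝ} (X : ℝ → ℝ → ℝ≥0∞) (c : ℝ≥0∞) :
    ∫⁻ s in Ioc (0:ℝ) M, ∫⁻ t in Ioc (0:ℝ) N, (X s t + c) =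
      (∫⁻ s in Ioc (0:ℝ) M, ∫⁻ t in Ioc (0:ℝ) N, X s t)
        + c * ENNReal.ofReal N * ENNReal.ofReal M := by
  have inner : ∀ s, ∫⁻ t in Ioc (0:ℝ) N, (X s t + c)
      = (∫⁻ t in Ioc (0:ℝ) N, X s t) + c * ENNReal.ofReal N := by
    intro s
    rw [lintegral_add_right _ measurable_const, setLIntegral_const,
      Real.volume_Ioc, sub_zero]
  calc ∫⁻ s in Ioc (0:ℝ) M, ∫⁻ t in Ioc (0:ℝ) N, (X s t + c)
      = ∫⁻ s in Ioc (0:ℝ) M, ((∫⁻ t in Ioc (0:ℝ) N, X s t) + c * ENNReal.ofReal N) :=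
        lintegral_congr inner
    _ = _ := by
        rw [lintegral_add_right _ measurable_const, setLIntegral_const,
          Real.volume_Ioc, sub_zero]

/-- **Decorrelation of bounded nonnegative random variables from a mixing bound on events.**
If `𝒜` and `ℬ` are sub-σ-algebras of `𝓕` such that `|ℙ(A ∩ B) − ℙ(A)ℙ(B)| ≤ δ` for all
`A ∈ 𝒜`, `B ∈ ℬ`, then for every bounded nonnegative `𝒜`-measurable `f` and bounded nonnegative
`ℬ`-measurable `g`, `|𝔼[fg] − 𝔼[f]𝔼[g]| ≤ δ ‖f‖_∞ ‖g‖_∞`. -/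
theorem decorrelation_of_mixing
    {Ω : Type*} {m0 : MeasurableSpace Ω} (μ : Measure Ω) [IsProbabilityMeasure μ]
    (m₁ m₂ : MeasurableSpace Ω) (hm₁ : m₁ ≤ m0) (hm₂ : m₂ ≤ m0)
    (δ : ℝ) (hδ : 0 ≤ δ)
    (hmix : ∀ A B : Set Ω, MeasurableSet[m₁] A → MeasurableSet[m₂] B →
      |(μ (A ∩ B)).toReal - (μ A).toReal * (μ B).toReal| ≤ δ)
    (f g : Ω → ℝ)
    (hf : Measurable[m₁] f) (hg : Measurable[m₂] g)
    (hf0 : ∀ ω, 0 ≤ f ω) (hg0 : ∀ ω, 0 ≤ g ω)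
    (hfb : MemLp f ⊤ μ) (hgb : MemLp g ⊤ μ) :
    |(∫ ω, f ω * g ω ∂μ) - (∫ ω, f ω ∂μ) * (∫ ω, g ω ∂μ)| ≤
      δ * (eLpNorm f ⊤ μ).toReal * (eLpNorm g ⊤ μ).toReal := by
  letI : MeasurableSpace Ω := m0
  have hfm : Measurable[m0] f := fun _ hs => hm₁ _ (hf hs)
  have hgm : Measurable[m0] g := fun _ hs => hm₂ _ (hg hs)
  set M : ℝ := (eLpNorm f ⊤ μ).toReal with hMdef
  set N : ℝ := (eLpNorm g ⊤ μ).toReal with hNdef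
  have hM : 0 ≤ M := ENNReal.toReal_nonneg
  have hN : 0 ≤ N := ENNReal.toReal_nonneg
  set A : ℝ → Set Ω := fun s => {ω | s < f ω} with hAdef
  set B : ℝ → Set Ω := fun t => {ω | t < g ω} with hBdef
  have hAm : ∀ s, MeasurableSet[m0] (A s) := fun s => hm₁ _ (hf measurableSet_Ioi)
  have hBm : ∀ t, MeasurableSet[m0] (B t) := fun t => hm₂ _ (hg measurableSet_Ioi)
  -- a.e. bounds
  have hft : eLpNormEssSup f μ ≠ ⊤ := by rw [← eLpNorm_exponent_top]; exact hfb.2.ne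
  have hgt : eLpNormEssSup g μ ≠ ⊤ := by rw [← eLpNorm_exponent_top]; exact hgb.2.ne
  have hfM : ∀ᵐ ω ∂μ, f ω ≤ M := by
    filter_upwards [ae_le_eLpNormEssSup (f := f) (μ := μ)] with ω hω
    have h1 := ENNReal.toReal_mono hft hω
    rw [toReal_enorm, Real.norm_eq_abs] at h1
    rw [hMdef, eLpNorm_exponent_top]
    exact (le_abs_self _).trans h1
  have hgN : ∀ᵐ ω ∂μ, g ω ≤ N := by
    filter_upwards [ae_le_eLpNormEssSup (f := g) (μ := μ)] with ω hω
    have h1 := ENNReal.toReal_mono hgt hω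
    rw [toReal_enorm, Real.norm_eq_abs] at h1
    rw [hNdef, eLpNorm_exponent_top]
    exact (le_abs_self _).trans h1
  have hA0 : ∀ s, M < s → μ (A s) = 0 := by
    intro s hs
    have h0 : μ {ω | M < f ω} = 0 := by simpa [not_le] using ae_iff.mp hfM
    exact measure_mono_null (fun ω hω => lt_trans hs hω) h0
  have hB0 : ∀ t, N < t → μ (B t) = 0 := by
    intro t ht
    have h0 : μ {ω | N < g ω} = 0 := by simpa [not_le] using ae_iff.mp hgN
    exact measure_mono_null (fun ω hω => lt_trans ht hω) h0
  -- layer cake identities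
  have L1 : ∫⁻ ω, ENNReal.ofReal (f ω) ∂μ = ∫⁻ s in Ioc (0:ℝ) M, μ (A s) := by
    rw [lintegral_eq_lintegral_meas_lt μ (Filter.Eventually.of_forall hf0) hfm.aemeasurable]
    exact trunc_lintegral _ hM fun s hs => hA0 s hs
  have L2 : ∫⁻ ω, ENNReal.ofReal (g ω) ∂μ = ∫⁻ t in Ioc (0:ℝ) N, μ (B t) := by
    rw [lintegral_eq_lintegral_meas_lt μ (Filter.Eventually.of_forall hg0) hgm.aemeasurable]
    exact trunc_lintegral _ hN fun t ht => hB0 t ht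
  set ν : Measure Ω := μ.withDensity (fun ω => ENNReal.ofReal (g ω)) with hνdef
  have hwm : Measurable fun ω => ENNReal.ofReal (g ω) := hgm.ennreal_ofReal
  have L3 : ∫⁻ ω, ENNReal.ofReal (f ω * g ω) ∂μ
      = ∫⁻ s in Ioc (0:ℝ) M, ∫⁻ t in Ioc (0:ℝ) N, μ (A s ∩ B t) := by
    have e1 : ∫⁻ ω, ENNReal.ofReal (f ω * g ω) ∂μ = ∫⁻ ω, ENNReal.ofReal (f ω) ∂ν := by
      rw [hνdef, lintegral_withDensity_eq_lintegral_mul μ hwm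
        hfm.ennreal_ofReal]
      refine lintegral_congr fun ω => ?_
      simp only [Pi.mul_apply]
      rw [mul_comm (f ω) (g ω), ENNReal.ofReal_mul (hg0 ω)]
    have e2 : ∀ s, ν (A s) = ∫⁻ t in Ioi (0:ℝ), μ (A s ∩ B t) := by
      intro s
      rw [hνdef, withDensity_apply _ (hAm s)]
      have := lintegral_eq_lintegral_meas_lt (μ.restrict (A s))
        (Filter.Eventually.of_forall hg0) hgm.aemeasurable
      rw [this]
      refine lintegral_congr fun t => ?_
      rw [Measure.restrict_apply (hBm t), inter_comm]
    have e3 : ∀ s, ν (A s) = ∫⁻ t in Ioc (0:ℝ) N, μ (A s ∩ B t) := by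
      intro s
      rw [e2 s]
      exact trunc_lintegral _ hN fun t ht =>
        measure_mono_null inter_subset_right (hB0 t ht)
    rw [e1, lintegral_eq_lintegral_meas_lt ν (Filter.Eventually.of_forall hf0)
      hfm.aemeasurable]
    have e4 : ∫⁻ s in Ioi (0:ℝ), ν (A s) = ∫⁻ s in Ioc (0:ℝ) M, ν (A s) := by
      refine trunc_lintegral _ hM fun s hs => ?_
      rw [e3 s]
      have : ∀ t, μ (A s ∩ B t) = 0 := fun t =>
        measure_mono_null inter_subset_left (hA0 s hs)
      simp [this]
    calc ∫⁻ s in Ioi (0:ℝ), ν {a | s < f a} = ∫⁻ s in Ioc (0:ℝ) M, ν (A s) := e4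
      _ = _ := lintegral_congr fun s => e3 s
  -- product identity
  have Eprod : ∫⁻ s in Ioc (0:ℝ) M, ∫⁻ t in Ioc (0:ℝ) N, μ (A s) * μ (B t)
      = (∫⁻ s in Ioc (0:ℝ) M, μ (A s)) * (∫⁻ t in Ioc (0:ℝ) N, μ (B t)) := by
    have hK : (∫⁻ t in Ioc (0:ℝ) N, μ (B t)) ≠ ⊤ := by
      refine ne_top_of_le_ne_top (b := ENNReal.ofReal N) ofReal_ne_top ?_
      calc ∫⁻ t in Ioc (0:ℝ) N, μ (B t) ≤ ∫⁻ _ in Ioc (0:ℝ) N, 1 :=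
            lintegral_mono fun t => prob_le_one
        _ = ENNReal.ofReal N := by rw [setLIntegral_const, one_mul, Real.volume_Ioc, sub_zero]
    calc ∫⁻ s in Ioc (0:ℝ) M, ∫⁻ t in Ioc (0:ℝ) N, μ (A s) * μ (B t)
        = ∫⁻ s in Ioc (0:ℝ) M, μ (A s) * ∫⁻ t in Ioc (0:ℝ) N, μ (B t) :=
          lintegral_congr fun s => lintegral_const_mul' _ _ (measure_ne_top μ _)
      _ = _ := lintegral_mul_const' _ _ hK
  -- pointwise mixing bounds in ℝ≥0∞
  have key : ∀ s t, μ (A s ∩ B t) ≤ μ (A s) * μ (B t) + ENNReal.ofReal δ ∧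
      μ (A s) * μ (B t) ≤ μ (A s ∩ B t) + ENNReal.ofReal δ := by
    intro s t
    have h := hmix (A s) (B t) (hf measurableSet_Ioi) (hg measurableSet_Ioi)
    rw [abs_sub_le_iff] at h
    have hr : μ (A s ∩ B t) = ENNReal.ofReal (μ (A s ∩ B t)).toReal :=
      (ENNReal.ofReal_toReal (measure_ne_top μ _)).symm
    have hpq : μ (A s) * μ (B t)
        = ENNReal.ofReal ((μ (A s)).toReal * (μ (B t)).toReal) := by
      rw [ENNReal.ofReal_mul ENNReal.toReal_nonneg, ENNReal.ofReal_toReal (measure_ne_top μ _),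
        ENNReal.ofReal_toReal (measure_ne_top μ _)]
    constructor
    · rw [hr, hpq, ← ENNReal.ofReal_add (mul_nonneg toReal_nonneg toReal_nonneg) hδ]
      exact ENNReal.ofReal_le_ofReal (by linarith [h.1])
    · rw [hr, hpq, ← ENNReal.ofReal_add toReal_nonneg hδ]
      exact ENNReal.ofReal_le_ofReal (by linarith [h.2])
  set P : ℝ≥0∞ := ∫⁻ s in Ioc (0:ℝ) M, ∫⁻ t in Ioc (0:ℝ) N, μ (A s ∩ B t) with hPdef
  set Q : ℝ≥0∞ := (∫⁻ s in Ioc (0:ℝ) M, μ (A s)) * (∫⁻ t in Ioc (0:ℝ) N, μ (B t)) with hQdef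
  set D : ℝ≥0∞ := ENNReal.ofReal δ * ENNReal.ofReal N * ENNReal.ofReal M with hDdef
  have ineq1 : P ≤ Q + D := by
    calc P ≤ ∫⁻ s in Ioc (0:ℝ) M, ∫⁻ t in Ioc (0:ℝ) N,
            (μ (A s) * μ (B t) + ENNReal.ofReal δ) :=
          lintegral_mono fun s => lintegral_mono fun t => (key s t).1
      _ = Q + D := by rw [double_add_const, Eprod]
  have ineq2 : Q ≤ P + D := by
    calc Q = ∫⁻ s in Ioc (0:ℝ) M, ∫⁻ t in Ioc (0:ℝ) N, μ (A s) * μ (B t) := Eprod.symm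
      _ ≤ ∫⁻ s in Ioc (0:ℝ) M, ∫⁻ t in Ioc (0:ℝ) N, (μ (A s ∩ B t) + ENNReal.ofReal δ) :=
          lintegral_mono fun s => lintegral_mono fun t => (key s t).2
      _ = P + D := by rw [double_add_const]
  -- finiteness
  have b1 : (∫⁻ s in Ioc (0:ℝ) M, μ (A s)) ≤ ENNReal.ofReal M := by
    refine le_trans (lintegral_mono fun _ => prob_le_one) ?_
    rw [setLIntegral_const, one_mul, Real.volume_Ioc, sub_zero]
  have b2 : (∫⁻ t in Ioc (0:ℝ) N, μ (B t)) ≤ ENNReal.ofReal N := by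
    refine le_trans (lintegral_mono fun _ => prob_le_one) ?_
    rw [setLIntegral_const, one_mul, Real.volume_Ioc, sub_zero]
  have hQtop : Q ≠ ⊤ := by
    rw [hQdef]
    exact ENNReal.mul_ne_top (ne_top_of_le_ne_top ofReal_ne_top b1)
      (ne_top_of_le_ne_top ofReal_ne_top b2)
  have hDtop : D ≠ ⊤ := by
    rw [hDdef]
    exact ENNReal.mul_ne_top (ENNReal.mul_ne_top ofReal_ne_top ofReal_ne_top) ofReal_ne_top
  have hPtop : P ≠ ⊤ := ne_top_of_le_ne_top (ENNReal.add_ne_top.2 ⟨hQtop, hDtop⟩) ineq1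
  -- convert Bochner integrals
  have Efg : ∫ ω, f ω * g ω ∂μ = P.toReal := by
    rw [integral_eq_lintegral_of_nonneg_ae
      (Filter.Eventually.of_forall fun ω => mul_nonneg (hf0 ω) (hg0 ω))
      (hfm.mul hgm).aestronglyMeasurable, L3, hPdef]
  have Ef : ∫ ω, f ω ∂μ = (∫⁻ s in Ioc (0:ℝ) M, μ (A s)).toReal := by
    rw [integral_eq_lintegral_of_nonneg_ae (Filter.Eventually.of_forall hf0)
      hfm.aestronglyMeasurable, L1]
  have Eg : ∫ ω, g ω ∂μ = (∫⁻ t in Ioc (0:ℝ) N, μ (B t)).toReal := by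
    rw [integral_eq_lintegral_of_nonneg_ae (Filter.Eventually.of_forall hg0)
      hgm.aestronglyMeasurable, L2]
  have EQ : (∫ ω, f ω ∂μ) * (∫ ω, g ω ∂μ) = Q.toReal := by
    rw [Ef, Eg, hQdef, ENNReal.toReal_mul]
  have hDval : D.toReal = δ * N * M := by
    rw [hDdef, ENNReal.toReal_mul, ENNReal.toReal_mul, ENNReal.toReal_ofReal hδ,
      ENNReal.toReal_ofReal hN, ENNReal.toReal_ofReal hM]
  rw [Efg, EQ]
  have goal' : |P.toReal - Q.toReal| ≤ D.toReal := by
    rw [abs_sub_le_iff]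
    constructor
    · have := ENNReal.toReal_mono (ENNReal.add_ne_top.2 ⟨hQtop, hDtop⟩) ineq1
      rw [ENNReal.toReal_add hQtop hDtop] at this
      linarith
    · have := ENNReal.toReal_mono (ENNReal.add_ne_top.2 ⟨hPtop, hDtop⟩) ineq2
      rw [ENNReal.toReal_add hPtop hDtop] at this
      linarith
  calc |P.toReal - Q.toReal| ≤ D.toReal := goal'
    _ = δ * M * N := by rw [hDval]; ring
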